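/- arXiv:2603.20070 — 2 statements merged into one kernel-verified Lean document; each statement's English description precedes it below -/
import Mathlib

section
/- For multivariate probabilist's Hermite polynomials: if Z ∼ N(0, I_N) and μ ∈ ℝ^N, then for any multi-indices α, β ∈ ℕ^N, E[H_α(μ+Z) H_β(μ+Z)] = Σ_{r ≤ min(α,β)} r! C(α,r) C(β,r) μ^{α+β-2r}, where the minimum and binomial coefficients are taken componentwise. -/
open MeasureTheory

/-- Multivariate probabilist's Hermite polynomial H_α(x) = ∏ⱼ h_{αⱼ}(xⱼ). -/
noncomputable def hermiteMV {N : ℕ} (α : Fin N → ℕ) (x : Fin N → ℝ) : ℝ :=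
  ∏ j, (Polynomial.aeval (x j) (Polynomial.hermite (α j)) : ℝ)

section HermiteAuxSection
open Polynomial Finset

namespace HermiteAux

/-- Integrability of `x^n * exp(-x²/2)`. -/
lemma integrable_pow_mul_exp (n : ℕ) :
    Integrable (fun x : ℝ => x ^ n * Real.exp (-(1/2) * x ^ 2)) := by
  have h : Integrable (fun x : ℝ => Real.exp (-(1/4 : ℝ) * x ^ 2)) :=
    integrable_exp_neg_mul_sq (by norm_num)
  refine ((h.const_mul ((n.factorial : ℝ) * Real.exp 1)).mono'
    (((continuous_pow n).mul (by continuity)).aestronglyMeasurable) ?_)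
  filter_upwards with x
  have h1 : |x| ^ n ≤ n.factorial * Real.exp |x| := by
    have h2 := Real.pow_div_factorial_le_exp (x := |x|) (abs_nonneg x) n
    rw [div_le_iff₀ (by positivity : (0:ℝ) < (n.factorial:ℝ))] at h2
    linarith
  have h3 : Real.exp (|x| + -(1/2) * x ^ 2) ≤ Real.exp (1 + -(1/4) * x ^ 2) := by
    apply Real.exp_le_exp.2
    nlinarith [sq_nonneg (|x| - 2), sq_abs x]
  calc ‖x ^ n * Real.exp (-(1/2) * x ^ 2)‖
      = |x| ^ n * Real.exp (-(1/2) * x ^ 2) := by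
        rw [norm_mul, Real.norm_eq_abs, Real.norm_eq_abs, abs_pow,
          Real.abs_exp]
    _ ≤ (n.factorial * Real.exp |x|) * Real.exp (-(1/2) * x ^ 2) := by
        exact mul_le_mul_of_nonneg_right h1 (Real.exp_pos _).le
    _ = n.factorial * Real.exp (|x| + -(1/2) * x ^ 2) := by
        rw [mul_assoc, ← Real.exp_add]
    _ ≤ n.factorial * Real.exp (1 + -(1/4) * x ^ 2) := by
        exact mul_le_mul_of_nonneg_left h3 (Nat.cast_nonneg _)
    _ = ↑n.factorial * Real.exp 1 * Real.exp (-(1/4) * x ^ 2) := by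
        rw [Real.exp_add, mul_assoc]

/-- `D hermite (n+1) = (n+1) • hermite n` over ℤ. -/
lemma derivative_hermite : ∀ n : ℕ,
    derivative (hermite (n + 1)) = (n + 1) • hermite n := by
  intro n
  induction n with
  | zero => simp [hermite_one, hermite_zero]
  | succ n ih =>
    rw [hermite_succ (n+1), derivative_sub, derivative_mul, derivative_X, one_mul, ih,
      derivative_smul, mul_smul_comm, add_sub_assoc, ← smul_sub,
      ← hermite_succ, add_nsmul, add_nsmul, one_nsmul]
    module

/-- Real-coefficient Hermite polynomial. -/
noncomputable def her (n : ℕ) : Polynomial ℝ := (hermite n).map (Int.castRingHom ℝ)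

lemma her_zero : her 0 = 1 := by simp [her, hermite_zero]

lemma her_succ (n : ℕ) : her (n + 1) = X * her n - derivative (her n) := by
  simp only [her, hermite_succ, Polynomial.map_sub, Polynomial.map_mul, map_X, derivative_map]

lemma derivative_her (n : ℕ) : derivative (her (n + 1)) = (n + 1 : ℝ) • her n := by
  have h := derivative_hermite n
  rw [nsmul_eq_mul] at h
  simp only [her, derivative_map, h, Polynomial.map_mul, Polynomial.map_natCast, smul_eq_C_mul]
  push_cast
  simp

lemma aeval_eq_her (x : ℝ) (n : ℕ) : (aeval x (hermite n) : ℝ) = eval x (her n) := by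
  rw [her, aeval_def, eval_map]
  rfl

/-- Translation identity, polynomial form. -/
lemma her_comp (y : ℝ) : ∀ n : ℕ, (her n).comp (X + C y) =
    ∑ i ∈ range (n + 1), ((n.choose i : ℝ) * y ^ (n - i)) • her i := by
  intro n
  induction n with
  | zero => simp [her_zero]
  | succ n ih =>
    have hD : (derivative (her n)).comp (X + C y) = derivative ((her n).comp (X + C y)) := by
      rw [derivative_comp, derivative_add, derivative_X, derivative_C, add_zero, one_mul]
    rw [her_succ, sub_comp, mul_comp, X_comp, hD, ih]
    set S := ∑ i ∈ range (n + 1), ((n.choose i : ℝ) * y ^ (n - i)) • her i with hS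
    have e1 : X * S - derivative S
        = ∑ i ∈ range (n + 1), ((n.choose i : ℝ) * y ^ (n - i)) • her (i + 1) := by
      rw [hS, derivative_sum, Finset.mul_sum, ← Finset.sum_sub_distrib]
      refine Finset.sum_congr rfl fun i _ => ?_
      rw [derivative_smul, mul_smul_comm, ← smul_sub, ← her_succ]
    have e2 : C y * S
        = ∑ i ∈ range (n + 1), ((n.choose i : ℝ) * y ^ (n + 1 - i)) • her i := by
      rw [hS, Finset.mul_sum]
      refine Finset.sum_congr rfl fun i hi => ?_
      rw [Finset.mem_range] at hi
      rw [mul_smul_comm, ← smul_eq_C_mul, smul_smul, Nat.succ_sub (Nat.lt_succ_iff.mp hi),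
        pow_succ]
      ring_nf
    have hsplit : (X + C y) * S - derivative S = (X * S - derivative S) + C y * S := by ring
    rw [hsplit, e1, e2]
    rw [Finset.sum_range_succ' (fun i => (((n+1).choose i : ℝ) * y ^ (n + 1 - i)) • her i) (n+1)]
    simp only [Nat.choose_succ_succ, Nat.succ_sub_succ, Nat.choose_zero_right, Nat.cast_add,
      Nat.cast_one, Nat.sub_zero]
    rw [Finset.sum_range_succ' (fun i => ((n.choose i : ℝ) * y ^ (n + 1 - i)) • her i) n]
    simp only [Nat.succ_sub_succ, Nat.choose_zero_right, Nat.cast_one, Nat.sub_zero]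
    have e3 : ∀ i ∈ range (n+1),
        (((n.choose i : ℝ) + (n.choose (i+1) : ℝ)) * y ^ (n - i)) • her (i+1)
        = ((n.choose i : ℝ) * y ^ (n-i)) • her (i+1)
          + ((n.choose (i+1) : ℝ) * y ^ (n-i)) • her (i+1) := fun i _ => by
      rw [add_mul, add_smul]
    rw [Finset.sum_congr rfl e3, Finset.sum_add_distrib,
      Finset.sum_range_succ (fun i => ((n.choose (i+1) : ℝ) * y ^ (n-i)) • her (i+1)) n,
      Nat.choose_succ_self, Nat.cast_zero, zero_mul, zero_smul, add_zero]
    abel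

/-- Polynomial times Gaussian is integrable. -/
lemma integrable_poly_exp (q : Polynomial ℝ) :
    Integrable (fun x : ℝ => eval x q * Real.exp (-(1/2) * x ^ 2)) := by
  induction q using Polynomial.induction_on' with
  | add p q hp hq =>
    simpa [eval_add, add_mul, Pi.add_def] using hp.add hq
  | monomial n a =>
    simpa [eval_monomial, mul_assoc] using (integrable_pow_mul_exp n).const_mul a

/-- Integration by parts for Hermite times polynomial against the Gaussian weight. -/
lemma parts (a : ℕ) (p : Polynomial ℝ) :
    ∫ x : ℝ, eval x (her (a+1)) * eval x p * Real.exp (-(1/2) * x ^ 2)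
    = ∫ x : ℝ, eval x (her a) * eval x (derivative p) * Real.exp (-(1/2) * x ^ 2) := by
  have key : ∀ x : ℝ, HasDerivAt (fun x => eval x (her a) * eval x p * Real.exp (-(1/2) * x ^ 2))
      (eval x (her a) * eval x (derivative p) * Real.exp (-(1/2) * x ^ 2)
        - eval x (her (a+1)) * eval x p * Real.exp (-(1/2) * x ^ 2)) x := by
    intro x
    have hexp : HasDerivAt (fun x : ℝ => Real.exp (-(1/2) * x ^ 2))
        (-x * Real.exp (-(1/2) * x ^ 2)) x := by
      have h1 : HasDerivAt (fun x : ℝ => -(1/2) * x ^ 2) (-x) x := by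
        simpa using ((hasDerivAt_pow 2 x).const_mul (-(1/2) : ℝ))
      simpa [mul_comm] using h1.exp
    have h := (((her a).hasDerivAt x).mul (p.hasDerivAt x)).mul hexp
    refine h.congr_deriv ?_
    have : eval x (her (a+1)) = x * eval x (her a) - eval x (derivative (her a)) := by
      rw [her_succ, eval_sub, eval_mul, eval_X]
    rw [this]
    simp only [Pi.mul_apply]
    ring
  have hint : Integrable (fun x : ℝ =>
      eval x (her a) * eval x (derivative p) * Real.exp (-(1/2) * x ^ 2)
        - eval x (her (a+1)) * eval x p * Real.exp (-(1/2) * x ^ 2)) := by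
    simpa [eval_mul, Pi.sub_def] using (integrable_poly_exp (her a * derivative p)).sub
      (integrable_poly_exp (her (a+1) * p))
  have hf : Integrable (fun x : ℝ =>
      eval x (her a) * eval x p * Real.exp (-(1/2) * x ^ 2)) := by
    simpa [eval_mul] using integrable_poly_exp (her a * p)
  have h0 := integral_eq_zero_of_hasDerivAt_of_integrable key hint hf
  rw [integral_sub (by simpa [eval_mul] using integrable_poly_exp (her a * derivative p))
    (by simpa [eval_mul] using integrable_poly_exp (her (a+1) * p))] at h0
  linarith [h0]

/-- The Gaussian measure as a weighted Lebesgue integral. -/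
lemma integral_gaussian_eq (g : ℝ → ℝ) :
    ∫ x, g x ∂(ProbabilityTheory.gaussianReal 0 1)
    = ∫ x, ProbabilityTheory.gaussianPDFReal 0 1 x * g x := by
  rw [ProbabilityTheory.gaussianReal_of_var_ne_zero _ one_ne_zero]
  have : ProbabilityTheory.gaussianPDF 0 1
      = fun x => ((ProbabilityTheory.gaussianPDFReal 0 1 x).toNNReal : ENNReal) := rfl
  rw [this, integral_withDensity_eq_integral_smul
    ((ProbabilityTheory.measurable_gaussianPDFReal 0 1).real_toNNReal) g]
  congr 1
  ext x
  rw [NNReal.smul_def, smul_eq_mul,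
    Real.coe_toNNReal _ (ProbabilityTheory.gaussianPDFReal_nonneg _ _ _)]

lemma gaussianPDFReal_eq (x : ℝ) : ProbabilityTheory.gaussianPDFReal 0 1 x
    = (Real.sqrt (2 * Real.pi))⁻¹ * Real.exp (-(1/2) * x ^ 2) := by
  rw [ProbabilityTheory.gaussianPDFReal]
  norm_num
  left
  ring_nf

/-- Integration by parts over the Gaussian measure. -/
lemma parts_gaussian (a : ℕ) (p : Polynomial ℝ) :
    ∫ x, eval x (her (a+1)) * eval x p ∂(ProbabilityTheory.gaussianReal 0 1)
    = ∫ x, eval x (her a) * eval x (derivative p) ∂(ProbabilityTheory.gaussianReal 0 1) := by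
  rw [integral_gaussian_eq, integral_gaussian_eq]
  simp only [gaussianPDFReal_eq]
  have e : ∀ q r : Polynomial ℝ,
      ∫ x, (Real.sqrt (2*Real.pi))⁻¹ * Real.exp (-(1/2) * x ^ 2) * (eval x q * eval x r)
      = (Real.sqrt (2*Real.pi))⁻¹ * ∫ x, eval x q * eval x r * Real.exp (-(1/2) * x ^ 2) := by
    intro q r
    rw [← integral_const_mul]
    congr 1; ext x; ring
  rw [e, e, parts a p]

/-- Polynomials are integrable against the Gaussian measure. -/
lemma integrable_poly_gaussian (q : Polynomial ℝ) :
    Integrable (fun x => eval x q) (ProbabilityTheory.gaussianReal 0 1) := by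
  rw [ProbabilityTheory.gaussianReal_of_var_ne_zero _ one_ne_zero]
  rw [integrable_withDensity_iff (ProbabilityTheory.measurable_gaussianPDF 0 1) (by
    filter_upwards with x using ENNReal.ofReal_lt_top)]
  have : (fun x => eval x q * (ProbabilityTheory.gaussianPDF 0 1 x).toReal)
      = fun x => (Real.sqrt (2 * Real.pi))⁻¹ * (eval x q * Real.exp (-(1/2) * x ^ 2)) := by
    ext x
    rw [ProbabilityTheory.gaussianPDF,
      ENNReal.toReal_ofReal (ProbabilityTheory.gaussianPDFReal_nonneg _ _ _),
      gaussianPDFReal_eq]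
    ring
  rw [this]
  exact (integrable_poly_exp q).const_mul _

/-- Orthogonality of Hermite polynomials w.r.t. the standard Gaussian. -/
lemma orth : ∀ a b : ℕ, ∫ x, eval x (her a) * eval x (her b)
      ∂(ProbabilityTheory.gaussianReal 0 1)
    = if a = b then (a.factorial : ℝ) else 0 := by
  have base : ∀ b : ℕ, ∫ x, eval x (her (b+1)) ∂(ProbabilityTheory.gaussianReal 0 1) = 0 := by
    intro b
    have := parts_gaussian b 1
    simpa [eval_one] using this
  intro a
  induction a with
  | zero =>
    intro b
    cases b with
    | zero =>
      simp only [her_zero, eval_one, one_mul]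
      simp [Nat.factorial]
    | succ b =>
      simp only [her_zero, eval_one, one_mul]
      rw [base b]
      simp
  | succ a ih =>
    intro b
    cases b with
    | zero =>
      simp only [her_zero, eval_one, mul_one]
      rw [base a]
      simp
    | succ b =>
      rw [parts_gaussian a (her (b+1))]
      have : ∀ x : ℝ, eval x (her a) * eval x (derivative (her (b+1)))
          = (b+1 : ℝ) * (eval x (her a) * eval x (her b)) := by
        intro x
        rw [derivative_her, eval_smul]
        simp only [smul_eq_mul]
        ring
      simp only [this]
      rw [integral_const_mul, ih b]
      by_cases hab : a = b
      · subst hab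
        simp only [if_pos rfl, Nat.factorial_succ]
        push_cast
        ring
      · simp [hab]

lemma eval_her_add (y z : ℝ) (n : ℕ) : eval (y + z) (her n)
    = ∑ i ∈ range (n+1), (n.choose i : ℝ) * y ^ (n - i) * eval z (her i) := by
  have h := congrArg (eval z) (her_comp y n)
  rw [eval_comp] at h
  simp only [eval_add, eval_X, eval_C] at h
  rw [add_comm z y] at h
  rw [h, eval_finset_sum]
  refine Finset.sum_congr rfl fun i _ => ?_
  rw [eval_smul, smul_eq_mul]

/-- The one-dimensional shifted product formula. -/
lemma oneDim (a b : ℕ) (y : ℝ) :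
    ∫ z, (aeval (y + z) (hermite a) : ℝ) * aeval (y + z) (hermite b)
      ∂(ProbabilityTheory.gaussianReal 0 1)
    = ∑ r : Fin (min a b + 1),
        (((r : ℕ).factorial : ℝ) * ((a.choose (r : ℕ) : ℝ)) * ((b.choose (r : ℕ) : ℝ))
          * y ^ (a + b - 2 * (r : ℕ))) := by
  have key : ∀ z : ℝ, (aeval (y + z) (hermite a) : ℝ) * aeval (y + z) (hermite b)
      = ∑ i ∈ range (a+1), ∑ j ∈ range (b+1),
          ((a.choose i : ℝ) * y ^ (a - i) * (b.choose j : ℝ) * y ^ (b - j))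
            * (eval z (her i) * eval z (her j)) := by
    intro z
    rw [aeval_eq_her, aeval_eq_her, eval_her_add, eval_her_add, Finset.sum_mul_sum]
    exact Finset.sum_congr rfl fun i _ => Finset.sum_congr rfl fun j _ => by ring
  have int1 : ∀ i j : ℕ, Integrable (fun z =>
      ((a.choose i : ℝ) * y ^ (a - i) * (b.choose j : ℝ) * y ^ (b - j))
        * (eval z (her i) * eval z (her j))) (ProbabilityTheory.gaussianReal 0 1) := by
    intro i j
    have := (integrable_poly_gaussian (her i * her j)).const_mul
      ((a.choose i : ℝ) * y ^ (a - i) * (b.choose j : ℝ) * y ^ (b - j))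
    simpa [eval_mul] using this
  simp only [key]
  rw [integral_finset_sum _ (fun i _ => integrable_finset_sum _ (fun j _ => int1 i j))]
  have swap2 : ∀ i ∈ range (a+1), ∫ z, ∑ j ∈ range (b+1),
      ((a.choose i : ℝ) * y ^ (a - i) * (b.choose j : ℝ) * y ^ (b - j))
        * (eval z (her i) * eval z (her j)) ∂(ProbabilityTheory.gaussianReal 0 1)
      = ∑ j ∈ range (b+1), if i = j then
          ((a.choose i : ℝ) * y ^ (a - i) * (b.choose j : ℝ) * y ^ (b - j)) * (i.factorial : ℝ)
        else 0 := by
    intro i _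
    rw [integral_finset_sum _ (fun j _ => int1 i j)]
    refine Finset.sum_congr rfl fun j _ => ?_
    rw [integral_const_mul, orth i j]
    split_ifs with h
    · rfl
    · rw [mul_zero]
  rw [Finset.sum_congr rfl swap2]
  simp only [Finset.sum_ite_eq, Finset.mem_range]
  have hinter : ∀ i : ℕ, (i < b + 1) = (i ∈ range (b+1)) := fun i => by
    simp [Finset.mem_range]
  calc (∑ i ∈ range (a+1), if i < b + 1 then
          ((a.choose i : ℝ) * y ^ (a - i) * (b.choose i : ℝ) * y ^ (b - i)) * (i.factorial : ℝ)
        else 0)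
      = ∑ i ∈ range (a+1) ∩ range (b+1),
          ((a.choose i : ℝ) * y ^ (a - i) * (b.choose i : ℝ) * y ^ (b - i)) * (i.factorial : ℝ) := by
        rw [← Finset.sum_ite_mem]
        exact Finset.sum_congr rfl fun i _ => by simp only [Finset.mem_range]
    _ = ∑ i ∈ range (min a b + 1),
          ((a.choose i : ℝ) * y ^ (a - i) * (b.choose i : ℝ) * y ^ (b - i)) * (i.factorial : ℝ) := by
        congr 1
        ext i
        simp only [Finset.mem_inter, Finset.mem_range]
        omega
    _ = ∑ r : Fin (min a b + 1),
        (((r : ℕ).factorial : ℝ) * ((a.choose (r : ℕ) : ℝ)) * ((b.choose (r : ℕ) : ℝ))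
          * y ^ (a + b - 2 * (r : ℕ))) := by
        rw [Finset.sum_range]
        refine Finset.sum_congr rfl fun i _ => ?_
        have hi : (i : ℕ) ≤ a ∧ (i : ℕ) ≤ b := by
          have := i.isLt
          omega
        have hpow : y ^ (a - (i:ℕ)) * y ^ (b - (i:ℕ)) = y ^ (a + b - 2 * (i:ℕ)) := by
          rw [← pow_add]
          congr 1
          omega
        rw [← hpow]
        ring

/-- Fubini for a finite product of standard Gaussians. -/
lemma integral_pi_prod : ∀ (n : ℕ) (f : Fin n → ℝ → ℝ),
    (∫ x : Fin n → ℝ, ∏ i, f i (x i)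
      ∂(Measure.pi fun _ : Fin n => ProbabilityTheory.gaussianReal 0 1))
    = ∏ i, ∫ z, f i z ∂(ProbabilityTheory.gaussianReal 0 1) := by
  intro n
  induction n with
  | zero =>
    intro f
    simp [Measure.pi_of_empty, integral_dirac]
  | succ n ih =>
    intro f
    have hmp := (measurePreserving_piFinSuccAbove
      (fun _ : Fin (n+1) => ProbabilityTheory.gaussianReal 0 1) 0).symm
    calc
      (∫ x : Fin (n+1) → ℝ, ∏ i, f i (x i)
          ∂(Measure.pi fun _ : Fin (n+1) => ProbabilityTheory.gaussianReal 0 1))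
        = ∫ p : ℝ × (Fin n → ℝ), f 0 p.1 * ∏ i : Fin n, f i.succ (p.2 i)
            ∂((ProbabilityTheory.gaussianReal 0 1).prod
              (Measure.pi fun _ : Fin n => ProbabilityTheory.gaussianReal 0 1)) := by
          rw [← hmp.integral_comp']
          congr 1
          ext p
          rw [Fin.prod_univ_succ]
          simp [MeasurableEquiv.piFinSuccAbove_symm_apply, Fin.insertNthEquiv,
            Fin.insertNth_zero, Fin.zero_succAbove]
      _ = (∫ z, f 0 z ∂(ProbabilityTheory.gaussianReal 0 1))
            * ∏ i : Fin n, ∫ z, f i.succ z ∂(ProbabilityTheory.gaussianReal 0 1) := by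
          rw [integral_prod_mul (f := f 0)
            (g := fun q : Fin n → ℝ => ∏ i : Fin n, f i.succ (q i)), ih]
      _ = ∏ i, ∫ z, f i z ∂(ProbabilityTheory.gaussianReal 0 1) := by
          rw [Fin.prod_univ_succ (f := fun i => ∫ z, f i z ∂(ProbabilityTheory.gaussianReal 0 1))]

end HermiteAux


open HermiteAux in
theorem hermiteMV_shifted_product' {N : ℕ} (α β : Fin N → ℕ) (μ : Fin N → ℝ) :
    (∫ z, (∏ j, (Polynomial.aeval (μ j + z j) (Polynomial.hermite (α j)) : ℝ))
        * (∏ j, (Polynomial.aeval (μ j + z j) (Polynomial.hermite (β j)) : ℝ))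
        ∂(Measure.pi fun _ : Fin N => ProbabilityTheory.gaussianReal 0 1)) =
      ∑ r : (∀ j, Fin (min (α j) (β j) + 1)),
        ∏ j, (((r j : ℕ).factorial : ℝ) * ((α j).choose (r j : ℕ) : ℝ) *
              ((β j).choose (r j : ℕ) : ℝ) * μ j ^ (α j + β j - 2 * (r j : ℕ))) := by
  have e0 : ∀ z : Fin N → ℝ,
      (∏ j, (Polynomial.aeval (μ j + z j) (Polynomial.hermite (α j)) : ℝ))
        * (∏ j, (Polynomial.aeval (μ j + z j) (Polynomial.hermite (β j)) : ℝ))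
      = ∏ j, ((Polynomial.aeval (μ j + z j) (Polynomial.hermite (α j)) : ℝ)
          * Polynomial.aeval (μ j + z j) (Polynomial.hermite (β j))) := fun z =>
    (Finset.prod_mul_distrib).symm
  simp only [e0]
  rw [integral_pi_prod N (fun j t => (Polynomial.aeval (μ j + t) (Polynomial.hermite (α j)) : ℝ)
    * Polynomial.aeval (μ j + t) (Polynomial.hermite (β j)))]
  rw [Finset.prod_congr rfl (fun j _ => oneDim (α j) (β j) (μ j))]
  rw [Finset.prod_univ_sum, Fintype.piFinset_univ]

end HermiteAuxSection

/-- **Expectation of shifted products of Hermite polynomials.** If Z ∼ N(0,I_N)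
and μ ∈ ℝ^N, then for multi-indices α, β,
E[H_α(μ+Z)H_β(μ+Z)] = Σ_{r ≤ min(α,β)} r! C(α,r) C(β,r) μ^{α+β−2r},
with the minimum, factorials, binomial coefficients and powers componentwise. -/
theorem hermiteMV_shifted_product {N : ℕ} (α β : Fin N → ℕ) (μ : Fin N → ℝ) :
    (∫ z, hermiteMV α (fun j => μ j + z j) * hermiteMV β (fun j => μ j + z j)
        ∂(Measure.pi fun _ : Fin N => ProbabilityTheory.gaussianReal 0 1)) =
      ∑ r : (∀ j, Fin (min (α j) (β j) + 1)),
        ∏ j, (((r j : ℕ).factorial : ℝ) * ((α j).choose (r j : ℕ) : ℝ) *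
              ((β j).choose (r j : ℕ) : ℝ) * μ j ^ (α j + β j - 2 * (r j : ℕ))) := by
  simpa only [hermiteMV] using hermiteMV_shifted_product' α β μ
end

section
/- Truncated exponential moment error: let V be a random variable with finite moments up to order 2D+2, D ∈ ℕ, C > 0, and let q(CD) be the e^{-CD}-quantile of |V| (so P(|V| > q(CD)) ≤ e^{-CD}). Denote exp_{≤D}(v) = Σ_{k=0}^D v^k/k!. Then |E[V exp_{≤D}(V)] − E[V e^V 1_{|V| ≤ q(CD)}]| ≤ e^{q(CD)} ‖V‖_{D+2}^{D+2}/(D+1)! + e^{-CD/2} Σ_{k=0}^D ‖V‖_{2k+2}^{k+1}/k!, where ‖V‖_p = (E|V|^p)^{1/p}. -/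
open MeasureTheory Filter Topology

/-- The e^{-t}-quantile function q(t) = inf{y : P(X ≤ y) ≥ 1 − e^{-t}}. -/
noncomputable def quantileFn {Ω : Type*} [MeasurableSpace Ω] (μ : MeasureTheory.Measure Ω)
    (X : Ω → ℝ) (t : ℝ) : ℝ :=
  sInf {y : ℝ | 1 - Real.exp (-t) ≤ (μ {ω | X ω ≤ y}).toReal}

/-- The Lᵖ-norm ‖V‖_p = (E|V|^p)^{1/p}. -/
noncomputable def lpNormR {Ω : Type*} [MeasurableSpace Ω] (μ : MeasureTheory.Measure Ω)
    (V : Ω → ℝ) (p : ℕ) : ℝ :=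
  (∫ ω, |V ω| ^ p ∂μ) ^ ((1 : ℝ) / p)

/-- The degree-D truncation of the exponential, exp_{≤D}(v) = Σ_{k=0}^D v^k/k!. -/
noncomputable def expTrunc (D : ℕ) (v : ℝ) : ℝ :=
  ∑ k ∈ Finset.range (D + 1), v ^ k / (k.factorial : ℝ)

open Filter Topology in
lemma exp_taylor_bound (N : ℕ) (v : ℝ) :
    |Real.exp v - ∑ k ∈ Finset.range N, v ^ k / (k.factorial : ℝ)| ≤
      |v| ^ N / (N.factorial : ℝ) * Real.exp |v| := by
  have hsum : Summable (fun n : ℕ => v ^ n / (n.factorial : ℝ)) :=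
    Real.summable_pow_div_factorial v
  have hexp : ∀ x : ℝ, Real.exp x = ∑' n : ℕ, x ^ n / (n.factorial : ℝ) := by
    intro x
    rw [Real.exp_eq_exp_ℝ, NormedSpace.exp_eq_tsum_div]
  have htail : Real.exp v - ∑ k ∈ Finset.range N, v ^ k / (k.factorial : ℝ)
      = ∑' n : ℕ, v ^ (n + N) / ((n + N).factorial : ℝ) := by
    rw [hexp v, ← Summable.sum_add_tsum_nat_add N hsum]
    ring
  rw [htail]
  have hb : ∀ n : ℕ, ‖v ^ (n + N) / ((n + N).factorial : ℝ)‖ ≤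
      |v| ^ N / (N.factorial : ℝ) * (|v| ^ n / (n.factorial : ℝ)) := by
    intro n
    rw [Real.norm_eq_abs, abs_div, abs_pow, Nat.abs_cast, div_mul_div_comm, ← pow_add,
      add_comm N n]
    apply div_le_div_of_nonneg_left (by positivity) (by positivity)
    have : N.factorial * n.factorial ≤ (n + N).factorial := by
      rw [add_comm n N]
      exact Nat.le_of_dvd (Nat.factorial_pos _) (Nat.factorial_mul_factorial_dvd_factorial_add N n)
    exact_mod_cast this
  have hg : HasSum (fun n : ℕ => |v| ^ N / (N.factorial : ℝ) * (|v| ^ n / (n.factorial : ℝ)))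
      (|v| ^ N / (N.factorial : ℝ) * Real.exp |v|) := by
    rw [hexp |v|]
    exact (Real.summable_pow_div_factorial |v|).hasSum.mul_left _
  exact tsum_of_norm_bounded hg hb

lemma rpow_one_div_pow {I : ℝ} (hI : 0 ≤ I) (p : ℕ) (hp : p ≠ 0) :
    (I ^ ((1 : ℝ) / p)) ^ p = I := by
  rw [← Real.rpow_natCast (I ^ ((1 : ℝ) / p)) p, ← Real.rpow_mul hI, one_div,
    inv_mul_cancel₀ (Nat.cast_ne_zero.2 hp), Real.rpow_one]

lemma rpow_one_div_pow' {I : ℝ} (hI : 0 ≤ I) (p m : ℕ) :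
    (I ^ ((1 : ℝ) / p)) ^ m = I ^ ((m : ℝ) / p) := by
  rw [← Real.rpow_natCast (I ^ ((1 : ℝ) / p)) m, ← Real.rpow_mul hI]
  congr 1
  ring

open Filter Topology in
lemma quantile_cdf {Ω : Type*} [MeasurableSpace Ω] (μ : Measure Ω) [IsProbabilityMeasure μ]
    (V : Ω → ℝ) (hV : Measurable V) (t : ℝ) (ht : 0 ≤ t) :
    1 - Real.exp (-t) ≤ (μ {ω | |V ω| ≤ quantileFn μ (fun ω' => |V ω'|) t}).toReal := by
  rcases eq_or_lt_of_le ht with ht0 | ht0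
  · rw [← ht0]; simp
  set F : ℝ → ℝ := fun y => (μ {ω | |V ω| ≤ y}).toReal with hF
  set S : Set ℝ := {y : ℝ | 1 - Real.exp (-t) ≤ F y} with hS
  have hq : quantileFn μ (fun ω' => |V ω'|) t = sInf S := rfl
  have hcpos : 0 < 1 - Real.exp (-t) := by
    have : Real.exp (-t) < 1 := Real.exp_lt_one_iff.2 (by linarith)
    linarith
  have hmono : ∀ ⦃a b : ℝ⦄, a ≤ b → F a ≤ F b := by
    intro a b hab
    exact ENNReal.toReal_mono (measure_ne_top _ _)
      (measure_mono (fun ω hω => le_trans hω hab))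
  -- nonempty
  have hne : S.Nonempty := by
    have hm : Monotone (fun n : ℕ => {ω | |V ω| ≤ (n : ℝ)}) := by
      intro n m hnm ω hω
      simp only [Set.mem_setOf_eq] at hω ⊢
      exact le_trans hω (by exact_mod_cast hnm)
    have hU := tendsto_measure_iUnion_atTop (μ := μ) hm
    have hun : (⋃ n : ℕ, {ω | |V ω| ≤ (n : ℝ)}) = Set.univ := by
      ext ω
      simp only [Set.mem_iUnion, Set.mem_univ, iff_true, Set.mem_setOf_eq]
      exact exists_nat_ge |V ω|
    rw [hun, measure_univ] at hU
    have hUr : Tendsto (fun n : ℕ => F (n : ℝ)) atTop (𝓝 1) := by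
      have := (ENNReal.tendsto_toReal (by simp : (1 : ENNReal) ≠ ⊤)).comp hU
      exact this
    have hlt1 : 1 - Real.exp (-t) < 1 := by have := Real.exp_pos (-t); linarith
    obtain ⟨n, hn⟩ := (hUr.eventually (eventually_ge_nhds hlt1)).exists
    exact ⟨(n : ℝ), hn⟩
  -- bounded below by 0
  have hbdd : BddBelow S := by
    refine ⟨0, fun y hy => ?_⟩
    by_contra hy0
    push_neg at hy0
    have hempty : {ω | |V ω| ≤ y} = ∅ := by
      ext ω
      simp only [Set.mem_setOf_eq, Set.mem_empty_iff_false, iff_false, not_le]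
      exact lt_of_lt_of_le hy0 (abs_nonneg _)
    have hFy : F y = 0 := by rw [hF]; simp [hempty]
    rw [hS, Set.mem_setOf_eq, hFy] at hy
    linarith
  set q : ℝ := sInf S with hqdef
  -- right continuity step
  have hstep : ∀ n : ℕ, ENNReal.ofReal (1 - Real.exp (-t)) ≤
      μ {ω | |V ω| ≤ q + 1 / (n + 1)} := by
    intro n
    have hlt : q < q + 1 / ((n : ℝ) + 1) := lt_add_of_pos_right _ (by positivity)
    obtain ⟨s, hsS, hs⟩ := (csInf_lt_iff hbdd hne).1 hlt
    have hFs : 1 - Real.exp (-t) ≤ F s := hsS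
    have : 1 - Real.exp (-t) ≤ F (q + 1 / ((n : ℝ) + 1)) :=
      le_trans hFs (hmono hs.le)
    exact ENNReal.ofReal_le_of_le_toReal this
  have hInter : {ω | |V ω| ≤ q} = ⋂ n : ℕ, {ω | |V ω| ≤ q + 1 / ((n : ℝ) + 1)} := by
    ext ω
    simp only [Set.mem_iInter, Set.mem_setOf_eq]
    constructor
    · intro h n
      have : (0 : ℝ) < 1 / ((n : ℝ) + 1) := by positivity
      linarith
    · intro h
      by_contra hcon
      push_neg at hcon
      obtain ⟨n, hn⟩ := exists_nat_one_div_lt (by linarith : (0:ℝ) < |V ω| - q)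
      have := h n
      linarith
  have hTd : Tendsto (fun n : ℕ => μ {ω | |V ω| ≤ q + 1 / ((n : ℝ) + 1)}) atTop
      (𝓝 (μ {ω | |V ω| ≤ q})) := by
    rw [hInter]
    have hmeas : ∀ n : ℕ, NullMeasurableSet {ω | |V ω| ≤ q + 1 / ((n : ℝ) + 1)} μ :=
      fun n => (measurableSet_le hV.abs measurable_const).nullMeasurableSet
    have hanti : Antitone (fun n : ℕ => {ω | |V ω| ≤ q + 1 / ((n : ℝ) + 1)}) := by
      intro n m hnm ω hω
      simp only [Set.mem_setOf_eq] at hω ⊢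
      have hcast : (n : ℝ) ≤ (m : ℝ) := Nat.cast_le.2 hnm
      have : 1 / ((m : ℝ) + 1) ≤ 1 / ((n : ℝ) + 1) :=
        one_div_le_one_div_of_le (by positivity) (by linarith)
      linarith
    exact tendsto_measure_iInter_atTop hmeas hanti ⟨0, measure_ne_top _ _⟩
  have hlim : ENNReal.ofReal (1 - Real.exp (-t)) ≤ μ {ω | |V ω| ≤ q} :=
    ge_of_tendsto hTd (Eventually.of_forall hstep)
  have := ENNReal.toReal_mono (measure_ne_top _ _) hlim
  rwa [ENNReal.toReal_ofReal hcpos.le] at this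

lemma quantile_tail {Ω : Type*} [MeasurableSpace Ω] (μ : Measure Ω) [IsProbabilityMeasure μ]
    (V : Ω → ℝ) (hV : Measurable V) (t : ℝ) (ht : 0 ≤ t) :
    (μ {ω | quantileFn μ (fun ω' => |V ω'|) t < |V ω|}).toReal ≤ Real.exp (-t) := by
  have h := quantile_cdf μ V hV t ht
  have hcompl : {ω | quantileFn μ (fun ω' => |V ω'|) t < |V ω|}
      = {ω | |V ω| ≤ quantileFn μ (fun ω' => |V ω'|) t}ᶜ := by
    ext ω; simp [not_le]
  rw [hcompl, measure_compl (measurableSet_le hV.abs measurable_const) (measure_ne_top _ _),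
    measure_univ, ENNReal.toReal_sub_of_le prob_le_one (by simp), ENNReal.toReal_one]
  linarith


/-- **Truncated exponential moment error.** For a random variable V with finite
moments up to order 2D+2, C > 0, and q(CD) the e^{-CD}-quantile of |V|,
|E[V exp_{≤D}(V)] − E[V e^V 1_{|V| ≤ q(CD)}]|
  ≤ e^{q(CD)} ‖V‖_{D+2}^{D+2}/(D+1)! + e^{-CD/2} Σ_{k=0}^D ‖V‖_{2k+2}^{k+1}/k!. -/
theorem trunc_exp_moment_error
    {Ω : Type*} [MeasurableSpace Ω] (μ : Measure Ω) [IsProbabilityMeasure μ]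
    (V : Ω → ℝ) (hV : Measurable V) (D : ℕ) (C : ℝ) (hC : 0 < C)
    (hmom : ∀ p : ℕ, p ≤ 2 * D + 2 → Integrable (fun ω => |V ω| ^ p) μ) :
    |(∫ ω, V ω * expTrunc D (V ω) ∂μ) -
        ∫ ω in {ω' | |V ω'| ≤ quantileFn μ (fun ω' => |V ω'|) (C * D)},
          V ω * Real.exp (V ω) ∂μ|
      ≤ Real.exp (quantileFn μ (fun ω' => |V ω'|) (C * D)) *
          lpNormR μ V (D + 2) ^ (D + 2) / ((D + 1).factorial : ℝ)
        + Real.exp (-(C * D) / 2) *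
          ∑ k ∈ Finset.range (D + 1), lpNormR μ V (2 * k + 2) ^ (k + 1) / (k.factorial : ℝ) := by
  set q : ℝ := quantileFn μ (fun ω' => |V ω'|) (C * D) with hqdef
  set E : Set Ω := {ω' | |V ω'| ≤ q} with hEdef
  have measE : MeasurableSet E := measurableSet_le hV.abs measurable_const
  have htN : 0 ≤ C * (D : ℝ) := mul_nonneg hC.le (Nat.cast_nonneg D)
  have htail : (μ Eᶜ).toReal ≤ Real.exp (-(C * D)) := by
    have hcompl : Eᶜ = {ω | q < |V ω|} := by
      ext ω; simp [hEdef, not_le]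
    rw [hcompl]
    exact quantile_tail μ V hV (C * D) htN
  -- integrability of powers
  have hVpow : ∀ k : ℕ, k ≤ 2 * D + 2 → Integrable (fun ω => V ω ^ k) μ := by
    intro k hk
    refine (hmom k hk).mono' ((hV.pow_const k).aestronglyMeasurable) ?_
    refine Eventually.of_forall fun ω => ?_
    rw [Real.norm_eq_abs, abs_pow]
  have hfdecomp : (fun ω => V ω * expTrunc D (V ω)) =
      fun ω => ∑ k ∈ Finset.range (D + 1), V ω ^ (k + 1) / (k.factorial : ℝ) := by
    funext ω
    rw [expTrunc, Finset.mul_sum]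
    exact Finset.sum_congr rfl fun k _ => by rw [pow_succ]; ring
  have hf_int : Integrable (fun ω => V ω * expTrunc D (V ω)) μ := by
    rw [hfdecomp]
    exact integrable_finset_sum _ fun k hk =>
      (hVpow (k + 1) (by simp only [Finset.mem_range] at hk; omega)).div_const _
  have hg_int : IntegrableOn (fun ω => V ω * Real.exp (V ω)) E μ := by
    have hb : ∀ ω ∈ E, ‖V ω * Real.exp (V ω)‖ ≤ |q| * Real.exp |q| := by
      intro ω hω
      have h1 : |V ω| ≤ q := hω
      have h2 : q ≤ |q| := le_abs_self q
      rw [Real.norm_eq_abs, abs_mul, Real.abs_exp]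
      exact mul_le_mul (le_trans h1 h2)
        (Real.exp_le_exp.2 (le_trans (le_trans (le_abs_self _) h1) h2))
        (Real.exp_pos _).le (abs_nonneg q)
    refine Integrable.mono' (integrable_const (|q| * Real.exp |q|))
      ((hV.mul (Real.measurable_exp.comp hV)).aestronglyMeasurable.restrict) ?_
    exact (ae_restrict_iff' measE).2 (Eventually.of_forall hb)
  -- split
  have hsplit : (∫ ω, V ω * expTrunc D (V ω) ∂μ) - ∫ ω in E, V ω * Real.exp (V ω) ∂μ
      = (∫ ω in E, (V ω * expTrunc D (V ω) - V ω * Real.exp (V ω)) ∂μ)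
        + ∫ ω in Eᶜ, V ω * expTrunc D (V ω) ∂μ := by
    rw [← integral_add_compl measE hf_int, integral_sub hf_int.integrableOn hg_int]
    ring
  -- ‖V‖_{D+2}^{D+2} = ∫ |V|^{D+2}
  have hIpow : (∫ ω, |V ω| ^ (D + 2) ∂μ) = lpNormR μ V (D + 2) ^ (D + 2) := by
    have hI0 : 0 ≤ ∫ ω, |V ω| ^ (D + 2) ∂μ := integral_nonneg fun ω => by positivity
    rw [lpNormR]
    exact (rpow_one_div_pow hI0 (D + 2) (by omega)).symm
  -- Term 1
  have hT1 : |∫ ω in E, (V ω * expTrunc D (V ω) - V ω * Real.exp (V ω)) ∂μ| ≤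
      Real.exp q * lpNormR μ V (D + 2) ^ (D + 2) / ((D + 1).factorial : ℝ) := by
    have hc0 : (0 : ℝ) < ((D + 1).factorial : ℝ) := by
      exact_mod_cast Nat.factorial_pos _
    have hbound : ∀ ω ∈ E, |V ω * expTrunc D (V ω) - V ω * Real.exp (V ω)| ≤
        Real.exp q * |V ω| ^ (D + 2) / ((D + 1).factorial : ℝ) := by
      intro ω hω
      have h1 : |V ω| ≤ q := hω
      have h2 : |Real.exp (V ω) - expTrunc D (V ω)| ≤
          |V ω| ^ (D + 1) / ((D + 1).factorial : ℝ) * Real.exp |V ω| := by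
        simpa [expTrunc] using exp_taylor_bound (D + 1) (V ω)
      calc |V ω * expTrunc D (V ω) - V ω * Real.exp (V ω)|
          = |V ω| * |Real.exp (V ω) - expTrunc D (V ω)| := by
            rw [← abs_mul, show V ω * expTrunc D (V ω) - V ω * Real.exp (V ω)
              = -(V ω * (Real.exp (V ω) - expTrunc D (V ω))) from by ring, abs_neg]
        _ ≤ |V ω| * (|V ω| ^ (D + 1) / ((D + 1).factorial : ℝ) * Real.exp |V ω|) :=
            mul_le_mul_of_nonneg_left h2 (abs_nonneg _)
        _ = |V ω| ^ (D + 2) / ((D + 1).factorial : ℝ) * Real.exp |V ω| := by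
            rw [pow_succ]; ring
        _ ≤ |V ω| ^ (D + 2) / ((D + 1).factorial : ℝ) * Real.exp q := by
            gcongr
        _ = Real.exp q * |V ω| ^ (D + 2) / ((D + 1).factorial : ℝ) := by ring
    have hB_int : Integrable (fun ω => Real.exp q * |V ω| ^ (D + 2) / ((D + 1).factorial : ℝ)) μ :=
      ((hmom (D + 2) (by omega)).const_mul _).div_const _
    have habs_int : IntegrableOn
        (fun ω => |V ω * expTrunc D (V ω) - V ω * Real.exp (V ω)|) E μ :=
      (hf_int.integrableOn.sub hg_int).abs
    calc |∫ ω in E, (V ω * expTrunc D (V ω) - V ω * Real.exp (V ω)) ∂μ|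
        ≤ ∫ ω in E, |V ω * expTrunc D (V ω) - V ω * Real.exp (V ω)| ∂μ := by
          simpa only [Real.norm_eq_abs] using
            norm_integral_le_integral_norm (μ := μ.restrict E)
              (f := fun ω => V ω * expTrunc D (V ω) - V ω * Real.exp (V ω))
      _ ≤ ∫ ω in E, Real.exp q * |V ω| ^ (D + 2) / ((D + 1).factorial : ℝ) ∂μ :=
          setIntegral_mono_on habs_int hB_int.integrableOn measE hbound
      _ ≤ ∫ ω, Real.exp q * |V ω| ^ (D + 2) / ((D + 1).factorial : ℝ) ∂μ :=
          setIntegral_le_integral hB_int (Eventually.of_forall fun ω => by positivity)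
      _ = Real.exp q * (∫ ω, |V ω| ^ (D + 2) ∂μ) / ((D + 1).factorial : ℝ) := by
          rw [integral_div, integral_const_mul]
      _ = Real.exp q * lpNormR μ V (D + 2) ^ (D + 2) / ((D + 1).factorial : ℝ) := by
          rw [hIpow]
  -- Term 2
  have hT2 : |∫ ω in Eᶜ, V ω * expTrunc D (V ω) ∂μ| ≤
      Real.exp (-(C * D) / 2) * ∑ k ∈ Finset.range (D + 1),
        lpNormR μ V (2 * k + 2) ^ (k + 1) / (k.factorial : ℝ) := by
    -- Cauchy–Schwarz for each k
    have hkey : ∀ k, k ∈ Finset.range (D + 1) →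
        (∫ ω in Eᶜ, |V ω| ^ (k + 1) ∂μ) ≤
          lpNormR μ V (2 * k + 2) ^ (k + 1) * Real.exp (-(C * D) / 2) := by
      intro k hk
      have h2k : 2 * k + 2 ≤ 2 * D + 2 := by
        simp only [Finset.mem_range] at hk; omega
      have hconj : Real.HolderConjugate 2 2 := Real.HolderConjugate.two_two
      have hsq : (fun ω => (|V ω| ^ (k + 1)) ^ 2) = fun ω => |V ω| ^ (2 * k + 2) := by
        funext ω; rw [← pow_mul]; ring_nf
      have hmem : MemLp (fun ω => |V ω| ^ (k + 1)) (ENNReal.ofReal 2) (μ.restrict Eᶜ) := by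
        rw [ENNReal.ofReal_ofNat]
        refine (memLp_two_iff_integrable_sq
          ((hV.abs.pow_const (k + 1)).aestronglyMeasurable.restrict)).2 ?_
        rw [hsq]
        exact (hmom (2 * k + 2) h2k).integrableOn
      have hmem1 : MemLp (fun _ : Ω => (1 : ℝ)) (ENNReal.ofReal 2) (μ.restrict Eᶜ) := by
        rw [ENNReal.ofReal_ofNat]; exact memLp_const 1
      have hH := integral_mul_le_Lp_mul_Lq_of_nonneg hconj
        (Eventually.of_forall fun ω => by positivity)
        (Eventually.of_forall fun ω => zero_le_one) hmem hmem1
      simp only [mul_one, Real.rpow_two, Real.one_rpow, one_pow] at hH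
      -- hH : ∫ |V|^{k+1} ∂ν ≤ (∫ (|V|^{k+1})^(2:ℝ) ∂ν)^(1/2) * (∫ 1 ∂ν)^(1/2)
      have hH2 : (∫ ω in Eᶜ, |V ω| ^ (k + 1) ∂μ) ≤
          (∫ ω in Eᶜ, |V ω| ^ (2 * k + 2) ∂μ) ^ ((1:ℝ)/2) * ((μ Eᶜ).toReal) ^ ((1:ℝ)/2) := by
        have e1 : (∫ ω in Eᶜ, ((|V ω| ^ (k + 1)) ^ 2) ∂μ)
            = ∫ ω in Eᶜ, |V ω| ^ (2 * k + 2) ∂μ := by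
          refine integral_congr_ae (Eventually.of_forall fun ω => ?_)
          show (|V ω| ^ (k + 1)) ^ 2 = |V ω| ^ (2 * k + 2)
          rw [← pow_mul, show (k + 1) * 2 = 2 * k + 2 from by ring]
        have e2 : (∫ _ω in Eᶜ, (1:ℝ) ∂μ) = (μ Eᶜ).toReal := by
          simp [Measure.real]
        rw [e1, e2] at hH
        exact hH
      have hle1 : (∫ ω in Eᶜ, |V ω| ^ (2 * k + 2) ∂μ) ^ ((1:ℝ)/2) ≤
          (∫ ω, |V ω| ^ (2 * k + 2) ∂μ) ^ ((1:ℝ)/2) := by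
        apply Real.rpow_le_rpow (integral_nonneg fun ω => by positivity)
          (setIntegral_le_integral (hmom (2 * k + 2) h2k)
            (Eventually.of_forall fun ω => by positivity)) (by norm_num)
      have hle2 : ((μ Eᶜ).toReal) ^ ((1:ℝ)/2) ≤ Real.exp (-(C * D) / 2) := by
        have := Real.rpow_le_rpow ENNReal.toReal_nonneg htail (by norm_num : (0:ℝ) ≤ 1/2)
        calc ((μ Eᶜ).toReal) ^ ((1:ℝ)/2) ≤ (Real.exp (-(C * D))) ^ ((1:ℝ)/2) := this
          _ = Real.exp (-(C * D) / 2) := by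
            rw [← Real.exp_mul]; ring_nf
      have hlp : lpNormR μ V (2 * k + 2) ^ (k + 1)
          = (∫ ω, |V ω| ^ (2 * k + 2) ∂μ) ^ ((1:ℝ)/2) := by
        have hI0 : 0 ≤ ∫ ω, |V ω| ^ (2 * k + 2) ∂μ := integral_nonneg fun ω => by positivity
        rw [lpNormR, rpow_one_div_pow' hI0 (2 * k + 2) (k + 1)]
        congr 1
        rw [div_eq_div_iff (by positivity) (by norm_num : (2:ℝ) ≠ 0)]
        push_cast
        ring
      calc (∫ ω in Eᶜ, |V ω| ^ (k + 1) ∂μ)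
          ≤ (∫ ω in Eᶜ, |V ω| ^ (2 * k + 2) ∂μ) ^ ((1:ℝ)/2) * ((μ Eᶜ).toReal) ^ ((1:ℝ)/2) := hH2
        _ ≤ (∫ ω, |V ω| ^ (2 * k + 2) ∂μ) ^ ((1:ℝ)/2) * Real.exp (-(C * D) / 2) := by
            apply mul_le_mul hle1 hle2 (Real.rpow_nonneg ENNReal.toReal_nonneg _)
              (Real.rpow_nonneg (integral_nonneg fun ω => by positivity) _)
        _ = lpNormR μ V (2 * k + 2) ^ (k + 1) * Real.exp (-(C * D) / 2) := by rw [hlp]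
    -- assemble T2
    have hpt : ∀ ω ∈ Eᶜ, |V ω * expTrunc D (V ω)| ≤
        ∑ k ∈ Finset.range (D + 1), |V ω| ^ (k + 1) / (k.factorial : ℝ) := by
      intro ω _
      calc |V ω * expTrunc D (V ω)|
          = |∑ k ∈ Finset.range (D + 1), V ω ^ (k + 1) / (k.factorial : ℝ)| := by
            congr 1
            rw [expTrunc, Finset.mul_sum]
            exact Finset.sum_congr rfl fun k _ => by rw [pow_succ]; ring
        _ ≤ ∑ k ∈ Finset.range (D + 1), |V ω ^ (k + 1) / (k.factorial : ℝ)| :=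
            Finset.abs_sum_le_sum_abs _ _
        _ = ∑ k ∈ Finset.range (D + 1), |V ω| ^ (k + 1) / (k.factorial : ℝ) := by
            refine Finset.sum_congr rfl fun k _ => ?_
            rw [abs_div, abs_pow, Nat.abs_cast]
    have hsum_int : IntegrableOn
        (fun ω => ∑ k ∈ Finset.range (D + 1), |V ω| ^ (k + 1) / (k.factorial : ℝ)) Eᶜ μ :=
      (integrable_finset_sum _ fun k hk =>
        (hmom (k + 1) (by simp only [Finset.mem_range] at hk; omega)).div_const _).integrableOn
    calc |∫ ω in Eᶜ, V ω * expTrunc D (V ω) ∂μ|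
        ≤ ∫ ω in Eᶜ, |V ω * expTrunc D (V ω)| ∂μ := by
          simpa only [Real.norm_eq_abs] using
            norm_integral_le_integral_norm (μ := μ.restrict Eᶜ)
              (f := fun ω => V ω * expTrunc D (V ω))
      _ ≤ ∫ ω in Eᶜ, (∑ k ∈ Finset.range (D + 1), |V ω| ^ (k + 1) / (k.factorial : ℝ)) ∂μ :=
          setIntegral_mono_on hf_int.abs.integrableOn hsum_int measE.compl hpt
      _ = ∑ k ∈ Finset.range (D + 1), ∫ ω in Eᶜ, |V ω| ^ (k + 1) / (k.factorial : ℝ) ∂μ :=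
          integral_finset_sum _ fun k hk =>
            ((hmom (k + 1) (by simp only [Finset.mem_range] at hk; omega)).div_const _).integrableOn
      _ = ∑ k ∈ Finset.range (D + 1), (∫ ω in Eᶜ, |V ω| ^ (k + 1) ∂μ) / (k.factorial : ℝ) := by
          refine Finset.sum_congr rfl fun k _ => ?_
          rw [integral_div]
      _ ≤ ∑ k ∈ Finset.range (D + 1),
            (lpNormR μ V (2 * k + 2) ^ (k + 1) * Real.exp (-(C * D) / 2)) / (k.factorial : ℝ) := by
          refine Finset.sum_le_sum fun k hk => ?_
          have hc0 : (0 : ℝ) < (k.factorial : ℝ) := by exact_mod_cast Nat.factorial_pos _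
          gcongr
          exact hkey k hk
      _ = Real.exp (-(C * D) / 2) * ∑ k ∈ Finset.range (D + 1),
            lpNormR μ V (2 * k + 2) ^ (k + 1) / (k.factorial : ℝ) := by
          rw [Finset.mul_sum]
          refine Finset.sum_congr rfl fun k _ => ?_
          ring
  -- conclusion
  rw [hsplit]
  calc |(∫ ω in E, (V ω * expTrunc D (V ω) - V ω * Real.exp (V ω)) ∂μ)
        + ∫ ω in Eᶜ, V ω * expTrunc D (V ω) ∂μ|
      ≤ |∫ ω in E, (V ω * expTrunc D (V ω) - V ω * Real.exp (V ω)) ∂μ|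
        + |∫ ω in Eᶜ, V ω * expTrunc D (V ω) ∂μ| := abs_add_le _ _
    _ ≤ _ := add_le_add hT1 hT2
end
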